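/- Fix b ≥ 1 and let f(a0, a1) = |a0| + |a1| mod 2 be the parity of the 2b bits a0 a1 (|a| denoting Hamming weight). For every two-outcome POVM (E0, E1) on ℂ^{2^{b+1}} and every ε ≥ 0: if ⟨Ψ_{a0 a1}, E_{f(a0,a1)} Ψ_{a0 a1}⟩ ≥ 1/2 + ε holds for all a0, a1 ∈ {0,1}^b, then ε ≤ 1/2^{b+1}. Hence no measurement of one copy of Ψ_{a0 a1} computes the parity of a0 a1 with success probability exceeding 1/2 + 1/2^{b+1} on all inputs. -/

import Mathlib

open ComplexOrder Matrix

/-- The state `Ψ_{a0 a1} = (1/√2)(|0⟩⊗|a0⟩ + |1⟩⊗|a1⟩)` in `ℂ² ⊗ ℂ^{2^b}`,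
written as a vector indexed by the standard basis `Bool × (Fin b → Bool)`. -/
noncomputable def Psi (b : ℕ) (a0 a1 : Fin b → Bool) : Bool × (Fin b → Bool) → ℂ :=
  fun p =>
    ((if p = (false, a0) then 1 else 0) + (if p = (true, a1) then 1 else 0)) /
      (Real.sqrt 2 : ℂ)

/-- Hamming weight of a bit string. -/
def wt {b : ℕ} (a : Fin b → Bool) : ℕ := (Finset.univ.filter fun k => a k = true).card

/-- sign of a bit string -/
noncomputable def sgn {b : ℕ} (a : Fin b → Bool) : ℂ := (-1) ^ wt a

lemma sgn_eq_prod {b : ℕ} (a : Fin b → Bool) :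
    sgn a = ∏ k, (if a k = true then (-1 : ℂ) else 1) := by
  rw [sgn, wt, Finset.prod_ite, Finset.prod_const, Finset.prod_const_one, mul_one]

lemma sgn_sum_zero {b : ℕ} (hb : 1 ≤ b) : ∑ a : Fin b → Bool, sgn a = 0 := by
  have i0 : Fin b := ⟨0, hb⟩
  refine Finset.sum_involution (fun a _ => Function.update a i0 (!a i0)) ?_ ?_
    (fun a _ => Finset.mem_univ _) ?_
  · intro a _
    rw [sgn_eq_prod, sgn_eq_prod, ← Finset.mul_prod_erase _ _ (Finset.mem_univ i0),
      ← Finset.mul_prod_erase _ _ (Finset.mem_univ i0)]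
    have h2 : ∀ k ∈ Finset.univ.erase i0,
        (if Function.update a i0 (!a i0) k = true then (-1:ℂ) else 1)
          = (if a k = true then (-1:ℂ) else 1) := by
      intro k hk
      rw [Function.update_of_ne (Finset.ne_of_mem_erase hk)]
    rw [Finset.prod_congr rfl h2]
    simp only [Function.update_self]
    cases h : a i0 <;> simp <;> ring
  · intro a _ _
    intro hcontra
    have := congrFun hcontra i0
    simp only [Function.update_self] at this
    cases h : a i0 <;> rw [h] at this <;> simp at this
  · intro a _
    funext k
    by_cases hk : k = i0
    · subst hk; simp
    · simp [Function.update_of_ne hk]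

lemma quad_single {ι : Type*} [Fintype ι] [DecidableEq ι] (M : Matrix ι ι ℂ) (p q : ι) :
    star (Pi.single p (1:ℂ)) ⬝ᵥ (M *ᵥ Pi.single q 1) = M p q := by
  simp [Matrix.mulVec_single, dotProduct, Pi.single_apply, apply_ite]

lemma Psi_eq {b : ℕ} (a0 a1 : Fin b → Bool) :
    Psi b a0 a1 = (Real.sqrt 2 : ℂ)⁻¹ •
      (Pi.single (false, a0) 1 + Pi.single (true, a1) 1) := by
  funext p
  simp [Psi, Pi.single_apply, div_eq_inv_mul, mul_comm]

lemma quad_psi {b : ℕ} (M : Matrix (Bool × (Fin b → Bool)) (Bool × (Fin b → Bool)) ℂ)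
    (a0 a1 : Fin b → Bool) :
    star (Psi b a0 a1) ⬝ᵥ (M *ᵥ Psi b a0 a1) =
      (M (false,a0) (false,a0) + M (false,a0) (true,a1) +
        M (true,a1) (false,a0) + M (true,a1) (true,a1)) / 2 := by
  rw [Psi_eq]
  rw [star_smul, Matrix.mulVec_smul, smul_dotProduct, dotProduct_smul]
  have hs : star ((Real.sqrt 2 : ℂ)⁻¹) = (Real.sqrt 2 : ℂ)⁻¹ := by
    rw [star_inv₀, Complex.star_def, Complex.conj_ofReal]
  rw [hs]
  have hexp : star (Pi.single (false,a0) (1:ℂ) + Pi.single (true,a1) 1) ⬝ᵥ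
      (M *ᵥ (Pi.single (false,a0) 1 + Pi.single (true,a1) 1)) =
      M (false,a0) (false,a0) + M (false,a0) (true,a1) +
        M (true,a1) (false,a0) + M (true,a1) (true,a1) := by
    rw [star_add, Matrix.mulVec_add, add_dotProduct, dotProduct_add, dotProduct_add,
      quad_single, quad_single, quad_single, quad_single]
    ring
  rw [smul_eq_mul, smul_eq_mul, hexp, ← mul_assoc, ← mul_inv]
  rw [← Complex.ofReal_mul, Real.mul_self_sqrt (by norm_num)]
  rw [inv_mul_eq_div]
  norm_num

lemma star_sgn {b : ℕ} (a : Fin b → Bool) : (starRingEnd ℂ) (sgn a) = sgn a := by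
  simp [sgn]

lemma sgn_mul_self {b : ℕ} (a : Fin b → Bool) : sgn a * sgn a = 1 := by
  rw [sgn, ← mul_pow]; norm_num

/-- the vector `u = ∑ (-1)^{|a|} |0,a⟩` -/
noncomputable def uvec (b : ℕ) : Bool × (Fin b → Bool) → ℂ :=
  fun p => if p.1 = false then sgn p.2 else 0

/-- the vector `v = ∑ (-1)^{|a|} |1,a⟩` -/
noncomputable def vvec (b : ℕ) : Bool × (Fin b → Bool) → ℂ :=
  fun p => if p.1 = true then sgn p.2 else 0

lemma Buv_eq {b : ℕ} (M : Matrix (Bool × (Fin b → Bool)) (Bool × (Fin b → Bool)) ℂ) :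
    star (uvec b) ⬝ᵥ (M *ᵥ vvec b) =
      ∑ a0, ∑ a1, sgn a0 * (M (false, a0) (true, a1) * sgn a1) := by
  simp only [dotProduct, Matrix.mulVec, uvec, vvec, Pi.star_apply, Fintype.sum_prod_type, Fintype.sum_bool]
  simp [star_sgn, Finset.mul_sum]

lemma Bvu_eq {b : ℕ} (M : Matrix (Bool × (Fin b → Bool)) (Bool × (Fin b → Bool)) ℂ) :
    star (vvec b) ⬝ᵥ (M *ᵥ uvec b) =
      ∑ a0, ∑ a1, sgn a1 * (M (true, a1) (false, a0) * sgn a0) := by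
  simp only [dotProduct, Matrix.mulVec, uvec, vvec, Pi.star_apply, Fintype.sum_prod_type, Fintype.sum_bool]
  rw [Finset.sum_comm]
  simp [star_sgn, Finset.mul_sum]

lemma sum_identity {b : ℕ} (hb : 1 ≤ b)
    (M : Matrix (Bool × (Fin b → Bool)) (Bool × (Fin b → Bool)) ℂ) :
    ∑ a0, ∑ a1, sgn a0 * sgn a1 * (star (Psi b a0 a1) ⬝ᵥ (M *ᵥ Psi b a0 a1)) =
      (star (uvec b) ⬝ᵥ (M *ᵥ vvec b) + star (vvec b) ⬝ᵥ (M *ᵥ uvec b)) / 2 := by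
  have key : ∀ f g : (Fin b → Bool) → ℂ,
      ∑ a0, ∑ a1, sgn a0 * sgn a1 * (f a0 * g a1) =
        (∑ a0, sgn a0 * f a0) * (∑ a1, sgn a1 * g a1) := by
    intro f g
    rw [Finset.sum_mul_sum]
    exact Finset.sum_congr rfl fun a0 _ => Finset.sum_congr rfl fun a1 _ => by ring
  have hstep : ∀ a0 a1 : Fin b → Bool,
      sgn a0 * sgn a1 * (star (Psi b a0 a1) ⬝ᵥ (M *ᵥ Psi b a0 a1)) =
        (sgn a0 * sgn a1 * (M (false,a0) (false,a0) * 1)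
          + sgn a0 * sgn a1 * (M (false,a0) (true,a1))
          + sgn a0 * sgn a1 * (M (true,a1) (false,a0))
          + sgn a0 * sgn a1 * (1 * M (true,a1) (true,a1))) / 2 := by
    intro a0 a1
    rw [quad_psi]
    ring
  calc ∑ a0, ∑ a1, sgn a0 * sgn a1 * (star (Psi b a0 a1) ⬝ᵥ (M *ᵥ Psi b a0 a1))
      = ((∑ a0 : Fin b → Bool, ∑ a1 : Fin b → Bool, sgn a0 * sgn a1 * (M (false,a0) (false,a0) * 1))
        + (∑ a0 : Fin b → Bool, ∑ a1 : Fin b → Bool, sgn a0 * sgn a1 * (M (false,a0) (true,a1)))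
        + (∑ a0 : Fin b → Bool, ∑ a1 : Fin b → Bool, sgn a0 * sgn a1 * (M (true,a1) (false,a0)))
        + (∑ a0 : Fin b → Bool, ∑ a1 : Fin b → Bool, sgn a0 * sgn a1 * (1 * M (true,a1) (true,a1)))) / 2 := by
        simp only [hstep, ← Finset.sum_div, Finset.sum_add_distrib]
    _ = (star (uvec b) ⬝ᵥ (M *ᵥ vvec b) + star (vvec b) ⬝ᵥ (M *ᵥ uvec b)) / 2 := by
        rw [key (fun a0 => M (false,a0) (false,a0)) (fun _ => 1),
          key (fun _ => 1) (fun a1 => M (true,a1) (true,a1))]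
        have h1 : (∑ a1 : Fin b → Bool, sgn a1 * 1) = 0 := by
          simpa using sgn_sum_zero hb
        rw [h1, Buv_eq, Bvu_eq]
        have h2 : (∑ a0 : Fin b → Bool, ∑ a1 : Fin b → Bool, sgn a0 * sgn a1 * M (false,a0) (true,a1)) =
            ∑ a0, ∑ a1, sgn a0 * (M (false,a0) (true,a1) * sgn a1) :=
          Finset.sum_congr rfl fun a0 _ => Finset.sum_congr rfl fun a1 _ => by ring
        have h3 : (∑ a0 : Fin b → Bool, ∑ a1 : Fin b → Bool, sgn a0 * sgn a1 * M (true,a1) (false,a0)) =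
            ∑ a0, ∑ a1, sgn a1 * (M (true,a1) (false,a0) * sgn a0) :=
          Finset.sum_congr rfl fun a0 _ => Finset.sum_congr rfl fun a1 _ => by ring
        rw [h2, h3]
        ring

lemma card_fun_bool (b : ℕ) : Fintype.card (Fin b → Bool) = 2 ^ b := by
  simp [Fintype.card_fun]

lemma xnorm {b : ℕ} : star (uvec b + vvec b) ⬝ᵥ (uvec b + vvec b) = (2 ^ (b+1) : ℂ) := by
  have : ∀ p : Bool × (Fin b → Bool),
      (starRingEnd ℂ) ((uvec b + vvec b) p) * (uvec b + vvec b) p = 1 := by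
    rintro ⟨c, a⟩
    cases c <;> simp [uvec, vvec, star_sgn, sgn_mul_self]
  simp only [dotProduct, Pi.star_apply, Complex.star_def, this]
  rw [Finset.sum_const, Finset.card_univ, Fintype.card_prod, card_fun_bool,
    Fintype.card_bool]
  push_cast [pow_succ]
  ring

lemma ynorm {b : ℕ} : star (uvec b - vvec b) ⬝ᵥ (uvec b - vvec b) = (2 ^ (b+1) : ℂ) := by
  have : ∀ p : Bool × (Fin b → Bool),
      (starRingEnd ℂ) ((uvec b - vvec b) p) * (uvec b - vvec b) p = 1 := by
    rintro ⟨c, a⟩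
    cases c <;> simp [uvec, vvec, star_sgn, sgn_mul_self]
  simp only [dotProduct, Pi.star_apply, Complex.star_def, this]
  rw [Finset.sum_const, Finset.card_univ, Fintype.card_prod, card_fun_bool,
    Fintype.card_bool]
  push_cast [pow_succ]
  ring

lemma psi_norm {b : ℕ} (a0 a1 : Fin b → Bool) :
    star (Psi b a0 a1) ⬝ᵥ ((1 : Matrix (Bool × (Fin b → Bool)) (Bool × (Fin b → Bool)) ℂ)
      *ᵥ Psi b a0 a1) = 1 := by
  rw [quad_psi]
  rw [Matrix.one_apply_eq, Matrix.one_apply_eq,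
    Matrix.one_apply_ne (by simp), Matrix.one_apply_ne (by simp)]
  norm_num
/-- if a two-outcome POVM `(E0, E1)` on `ℂ^{2^{b+1}}` computes the parity
`f(a0,a1) = |a0| + |a1| mod 2` from one copy of `Ψ_{a0 a1}` with success probability at
least `1/2 + ε` on all inputs, then `ε ≤ 1/2^{b+1}`. -/
theorem stmt5 (b : ℕ) (hb : 1 ≤ b) (ε : ℝ) (hε : 0 ≤ ε)
    (E : Bool → Matrix (Bool × (Fin b → Bool)) (Bool × (Fin b → Bool)) ℂ)
    (hE0 : (E false).PosSemidef) (hE1 : (E true).PosSemidef)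
    (hsum : E false + E true = 1)
    (h : ∀ a0 a1 : Fin b → Bool,
      1 / 2 + ε ≤
        (star (Psi b a0 a1) ⬝ᵥ
          (E (decide ((wt a0 + wt a1) % 2 = 1)) *ᵥ Psi b a0 a1)).re) :
    ε ≤ 1 / 2 ^ (b + 1) := by
  set D : Matrix (Bool × (Fin b → Bool)) (Bool × (Fin b → Bool)) ℂ :=
    E false - E true with hD
  -- pointwise bound
  have hpt : ∀ a0 a1 : Fin b → Bool,
      2 * ε ≤ (-1 : ℝ) ^ (wt a0 + wt a1) *
        (star (Psi b a0 a1) ⬝ᵥ (D *ᵥ Psi b a0 a1)).re := by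
    intro a0 a1
    have hone : (star (Psi b a0 a1) ⬝ᵥ (E false *ᵥ Psi b a0 a1)) +
        (star (Psi b a0 a1) ⬝ᵥ (E true *ᵥ Psi b a0 a1)) = 1 := by
      rw [← dotProduct_add, ← Matrix.add_mulVec, hsum, psi_norm]
    have hone' : (star (Psi b a0 a1) ⬝ᵥ (E false *ᵥ Psi b a0 a1)).re +
        (star (Psi b a0 a1) ⬝ᵥ (E true *ᵥ Psi b a0 a1)).re = 1 := by
      have := congrArg Complex.re hone
      simpa [Complex.add_re] using this
    have hDre : (star (Psi b a0 a1) ⬝ᵥ (D *ᵥ Psi b a0 a1)).re =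
        (star (Psi b a0 a1) ⬝ᵥ (E false *ᵥ Psi b a0 a1)).re -
        (star (Psi b a0 a1) ⬝ᵥ (E true *ᵥ Psi b a0 a1)).re := by
      rw [hD, Matrix.sub_mulVec, dotProduct_sub, Complex.sub_re]
    rcases Nat.even_or_odd (wt a0 + wt a1) with hpar | hpar
    · have hdec : decide ((wt a0 + wt a1) % 2 = 1) = false := by
        simp [Nat.even_iff.mp hpar]
      have hh := h a0 a1
      rw [hdec] at hh
      rw [hpar.neg_one_pow, hDre]
      linarith
    · have hdec : decide ((wt a0 + wt a1) % 2 = 1) = true := by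
        simp [Nat.odd_iff.mp hpar]
      have hh := h a0 a1
      rw [hdec] at hh
      rw [hpar.neg_one_pow, hDre]
      linarith
  -- sum the pointwise bounds
  have hsum1 : ((2:ℝ) ^ b) ^ 2 * (2 * ε) ≤
      ∑ a0 : Fin b → Bool, ∑ a1 : Fin b → Bool, (-1 : ℝ) ^ (wt a0 + wt a1) *
        (star (Psi b a0 a1) ⬝ᵥ (D *ᵥ Psi b a0 a1)).re := by
    have := Finset.sum_le_sum (s := (Finset.univ : Finset (Fin b → Bool)))
      (fun a0 _ => Finset.sum_le_sum (s := (Finset.univ : Finset (Fin b → Bool)))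
        (fun a1 _ => hpt a0 a1))
    calc ((2:ℝ) ^ b) ^ 2 * (2 * ε)
        = ∑ _a0 : Fin b → Bool, ∑ _a1 : Fin b → Bool, 2 * ε := by
          rw [Finset.sum_const, Finset.sum_const, Finset.card_univ, card_fun_bool,
            nsmul_eq_mul, nsmul_eq_mul]
          push_cast
          ring
      _ ≤ _ := this
  -- rewrite the sum as the real part of a complex sum
  have hre : ∑ a0 : Fin b → Bool, ∑ a1 : Fin b → Bool, (-1 : ℝ) ^ (wt a0 + wt a1) *
        (star (Psi b a0 a1) ⬝ᵥ (D *ᵥ Psi b a0 a1)).re =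
      (∑ a0 : Fin b → Bool, ∑ a1 : Fin b → Bool,
        sgn a0 * sgn a1 * (star (Psi b a0 a1) ⬝ᵥ (D *ᵥ Psi b a0 a1))).re := by
    rw [Complex.re_sum]
    refine Finset.sum_congr rfl fun a0 _ => ?_
    rw [Complex.re_sum]
    refine Finset.sum_congr rfl fun a1 _ => ?_
    have : sgn a0 * sgn a1 = (((-1:ℝ) ^ (wt a0 + wt a1) : ℝ) : ℂ) := by
      rw [sgn, sgn, ← pow_add]
      push_cast
      ring
    rw [this, Complex.re_ofReal_mul]
  -- bounds on the quadratic forms at x = u+v and y = u-v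
  have hrepos : ∀ (M : Matrix (Bool × (Fin b → Bool)) (Bool × (Fin b → Bool)) ℂ)
      (hM : M.PosSemidef) (w : Bool × (Fin b → Bool) → ℂ),
      0 ≤ (star w ⬝ᵥ (M *ᵥ w)).re := by
    intro M hM w
    have h1 := hM.dotProduct_mulVec_nonneg w
    rw [Complex.le_def] at h1
    simpa using h1.1
  have hx : (star (uvec b + vvec b) ⬝ᵥ (D *ᵥ (uvec b + vvec b))).re ≤ 2 ^ (b+1) := by
    have hD1 : D = 1 - (2:ℂ) • E true := by
      rw [hD, ← hsum, two_smul]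
      abel
    have hq : star (uvec b + vvec b) ⬝ᵥ (D *ᵥ (uvec b + vvec b)) =
        star (uvec b + vvec b) ⬝ᵥ (uvec b + vvec b) -
          (2:ℂ) * (star (uvec b + vvec b) ⬝ᵥ (E true *ᵥ (uvec b + vvec b))) := by
      rw [hD1, Matrix.sub_mulVec, Matrix.one_mulVec, dotProduct_sub,
        Matrix.smul_mulVec, dotProduct_smul, smul_eq_mul]
    rw [hq, xnorm, Complex.sub_re]
    have h2 : ((2:ℂ) * (star (uvec b + vvec b) ⬝ᵥ (E true *ᵥ (uvec b + vvec b)))).re =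
        2 * (star (uvec b + vvec b) ⬝ᵥ (E true *ᵥ (uvec b + vvec b))).re := by
      have : ((2:ℂ)) = (((2:ℝ)):ℂ) := by norm_num
      rw [this, Complex.re_ofReal_mul]
    rw [h2]
    have h3 := hrepos (E true) hE1 (uvec b + vvec b)
    have h4 : ((2:ℂ) ^ (b+1)).re = (2:ℝ) ^ (b+1) := by
      rw [show ((2:ℂ)) = (((2:ℝ)):ℂ) by norm_num, ← Complex.ofReal_pow, Complex.ofReal_re]
    rw [h4]
    linarith
  have hy : -(2 ^ (b+1) : ℝ) ≤ (star (uvec b - vvec b) ⬝ᵥ (D *ᵥ (uvec b - vvec b))).re := by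
    have hD1 : D = (2:ℂ) • E false - 1 := by
      rw [hD, ← hsum, two_smul]
      abel
    have hq : star (uvec b - vvec b) ⬝ᵥ (D *ᵥ (uvec b - vvec b)) =
        (2:ℂ) * (star (uvec b - vvec b) ⬝ᵥ (E false *ᵥ (uvec b - vvec b))) -
          star (uvec b - vvec b) ⬝ᵥ (uvec b - vvec b) := by
      rw [hD1, Matrix.sub_mulVec, Matrix.one_mulVec, dotProduct_sub,
        Matrix.smul_mulVec, dotProduct_smul, smul_eq_mul]
    rw [hq, ynorm, Complex.sub_re]
    have h2 : ((2:ℂ) * (star (uvec b - vvec b) ⬝ᵥ (E false *ᵥ (uvec b - vvec b)))).re =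
        2 * (star (uvec b - vvec b) ⬝ᵥ (E false *ᵥ (uvec b - vvec b))).re := by
      have : ((2:ℂ)) = (((2:ℝ)):ℂ) := by norm_num
      rw [this, Complex.re_ofReal_mul]
    rw [h2]
    have h3 := hrepos (E false) hE0 (uvec b - vvec b)
    have h4 : ((2:ℂ) ^ (b+1)).re = (2:ℝ) ^ (b+1) := by
      rw [show ((2:ℂ)) = (((2:ℝ)):ℂ) by norm_num, ← Complex.ofReal_pow, Complex.ofReal_re]
    rw [h4]
    linarith
  -- bilinear expansion
  have hexpand : star (uvec b + vvec b) ⬝ᵥ (D *ᵥ (uvec b + vvec b)) -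
      star (uvec b - vvec b) ⬝ᵥ (D *ᵥ (uvec b - vvec b)) =
      2 * (star (uvec b) ⬝ᵥ (D *ᵥ vvec b) + star (vvec b) ⬝ᵥ (D *ᵥ uvec b)) := by
    simp only [star_add, star_sub, Matrix.mulVec_add, Matrix.mulVec_sub,
      add_dotProduct, sub_dotProduct, dotProduct_add, dotProduct_sub]
    ring
  -- put everything together
  have hid := sum_identity hb D
  have e1 : (∑ a0 : Fin b → Bool, ∑ a1 : Fin b → Bool,
      sgn a0 * sgn a1 * (star (Psi b a0 a1) ⬝ᵥ (D *ᵥ Psi b a0 a1))).re =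
      ((star (uvec b + vvec b) ⬝ᵥ (D *ᵥ (uvec b + vvec b))).re -
        (star (uvec b - vvec b) ⬝ᵥ (D *ᵥ (uvec b - vvec b))).re) / 4 := by
    rw [hid]
    have e2 : (star (uvec b) ⬝ᵥ (D *ᵥ vvec b) + star (vvec b) ⬝ᵥ (D *ᵥ uvec b)) / 2 =
        (star (uvec b + vvec b) ⬝ᵥ (D *ᵥ (uvec b + vvec b)) -
          star (uvec b - vvec b) ⬝ᵥ (D *ᵥ (uvec b - vvec b))) / ((4:ℝ):ℂ) := by
      rw [hexpand]
      push_cast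
      ring
    rw [e2, Complex.div_ofReal_re, Complex.sub_re]
  have hps : (2:ℝ) ^ (b+1) = 2 * 2 ^ b := by rw [pow_succ]; ring
  have hfinal : ((2:ℝ) ^ b) ^ 2 * (2 * ε) ≤ 2 ^ b := by
    rw [hre, e1] at hsum1
    linarith
  have hp : (0:ℝ) < 2 ^ b := by positivity
  rw [le_div_iff₀ (by positivity), hps]
  nlinarith [hfinal, hp]
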